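/- Let K be a number field and let G ⊆ K* be a subgroup of its multiplicative group. Then there exists a unique subring S ⊆ K, minimal with respect to inclusion, such that for every finite nonempty subset Y ⊆ G the S-submodule SY of K generated by Y is an invertible ideal of S within K. Moreover, this minimal subring S is an order, i.e. a domain whose additive group is isomorphic to ℤ^m for some m ≥ 0. -/

import Mathlib

/-- `S` makes all finite nonempty subsets `Y` of `G` invertible: for each such `Y`,
the `S`-submodule `SY` of `K` generated by `Y` is an invertible ideal of `S` within
`K`, i.e. `(SY)·J = S` for some `S`-submodule `J` of `K`. -/
def MakesFinsetsInvertible {K : Type*} [Field K] (G : Subgroup Kˣ) (S : Subring K) : Prop :=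
  ∀ Y : Finset Kˣ, Y.Nonempty → (Y : Set Kˣ) ⊆ (G : Set Kˣ) →
    ∃ J : Submodule ↥S K,
      Submodule.span ↥S ((fun u : Kˣ => (u : K)) '' (Y : Set Kˣ)) * J = 1

set_option maxHeartbeats 1000000

open Polynomial Submodule NumberField Pointwise
open scoped nonZeroDivisors

namespace Stmt8Aux

variable {K : Type*} [Field K]


variable {K : Type*} [Field K]

/-- Partial evaluations of an integer polynomial at `x`:
`hh f x j = ∑_{i=0}^{j} f.coeff (n - j + i) * x^i` where `n = f.natDegree`. -/
noncomputable def hh (f : Polynomial ℤ) (x : K) (j : ℕ) : K :=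
  ∑ i ∈ Finset.range (j + 1), (f.coeff (f.natDegree - j + i) : K) * x ^ i

lemma hh_zero (f : Polynomial ℤ) (x : K) : hh f x 0 = (f.coeff f.natDegree : K) := by
  simp [hh]

lemma hh_rec (f : Polynomial ℤ) (x : K) {j : ℕ} (hj : j < f.natDegree) :
    x * hh f x j = hh f x (j + 1) - (f.coeff (f.natDegree - 1 - j) : K) := by
  set n := f.natDegree
  have : hh f x (j + 1)
      = ∑ i ∈ Finset.range (j + 1), (f.coeff (n - (j+1) + (i+1)) : K) * x ^ (i+1)
        + (f.coeff (n - (j+1) + 0) : K) * x ^ 0 := by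
    rw [hh, Finset.sum_range_succ']
  have h3 : x * hh f x j = ∑ i ∈ Finset.range (j + 1), (f.coeff (n - (j+1) + (i+1)) : K) * x ^ (i+1) := by
    rw [hh, Finset.mul_sum]
    refine Finset.sum_congr rfl fun i _ => ?_
    have h1 : n - (j+1) + (i+1) = n - j + i := by omega
    rw [h1]; ring
  rw [this, h3]
  have h2 : n - (j+1) + 0 = n - 1 - j := by omega
  rw [h2]
  ring

lemma hh_natDegree (f : Polynomial ℤ) (x : K) : hh f x f.natDegree = aeval x f := by
  rw [hh, aeval_eq_sum_range]
  refine Finset.sum_congr rfl fun i hi => ?_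
  have : f.natDegree - f.natDegree + i = i := by omega
  rw [this, zsmul_eq_mul]



variable {K : Type*} [Field K]

lemma natDegree_pos_of_aeval [CharZero K] (f : Polynomial ℤ) (hf0 : f ≠ 0) {x : K} (hx : aeval x f = 0) :
    0 < f.natDegree := by
  rcases Nat.eq_zero_or_pos f.natDegree with h | h
  · exfalso
    have hC := Polynomial.eq_C_of_natDegree_eq_zero h
    rw [hC, aeval_C] at hx
    have : f.coeff 0 = 0 := by
      have hx' : ((f.coeff 0 : ℤ) : K) = 0 := by simpa using hx
      exact_mod_cast hx' 
    exact hf0 (by rw [hC, this, map_zero])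
  · exact h

lemma exists_prim [NumberField K] (x : K) :
    ∃ f : Polynomial ℤ, f.IsPrimitive ∧ aeval x f = 0 ∧ 0 < f.natDegree := by
  have halg : Algebra.IsAlgebraic ℚ K := Algebra.IsAlgebraic.of_finite ℚ K
  obtain ⟨p, hp0, hpx⟩ := halg.isAlgebraic x
  set f0 : Polynomial ℤ := IsLocalization.integerNormalization (nonZeroDivisors ℤ) p with hf0def
  have hf00 : f0 ≠ 0 := fun h =>
    hp0 ((IsFractionRing.integerNormalization_eq_zero_iff (A := ℤ) (K := ℚ)).mp h)
  have hf0x : aeval x f0 = 0 :=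
    IsLocalization.integerNormalization_aeval_eq_zero (nonZeroDivisors ℤ) p hpx
  have hpp : aeval x f0.primPart = 0 := by
    have heq := f0.eq_C_content_mul_primPart
    rw [heq, map_mul, aeval_C] at hf0x
    have hc : algebraMap ℤ K f0.content ≠ 0 := by
      simp only [algebraMap_int_eq, eq_intCast, ne_eq, Int.cast_eq_zero, content_eq_zero_iff]
      exact hf00
    exact (mul_eq_zero.mp hf0x).resolve_left hc
  exact ⟨f0.primPart, f0.isPrimitive_primPart, hpp,
    natDegree_pos_of_aeval f0.primPart f0.primPart_ne_zero hpp⟩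

lemma exists_bezout (f : Polynomial ℤ) (hprim : f.IsPrimitive) :
    ∃ c : Fin (f.natDegree + 1) → ℤ, ∑ i, c i * f.coeff i = 1 := by
  set n := f.natDegree
  set I : Ideal ℤ := Ideal.span (Set.range fun i : Fin (n + 1) => f.coeff i) with hI
  obtain ⟨d, hd0⟩ := (inferInstance : I.IsPrincipal).principal
  have hd : I = Ideal.span {d} := hd0
  have hdvd : ∀ i : Fin (n + 1), d ∣ f.coeff i := by
    intro i
    have : f.coeff i ∈ I := Ideal.subset_span ⟨i, rfl⟩
    rwa [hd, Ideal.mem_span_singleton] at this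
  have hdone : IsUnit d := by
    have : d ∣ f.content := by
      apply Finset.dvd_gcd
      intro m hm
      have hmn : m < n + 1 :=
        Nat.lt_succ_of_le (Polynomial.le_natDegree_of_mem_supp m hm)
      exact hdvd ⟨m, hmn⟩
    rw [hprim.content_eq_one] at this
    exact isUnit_of_dvd_one this
  have h1 : (1 : ℤ) ∈ I := by
    rw [hd, Ideal.span_singleton_eq_top.mpr hdone]
    exact Submodule.mem_top
  rw [hI] at h1
  obtain ⟨c, hc⟩ := (mem_span_range_iff_exists_fun ℤ).mp h1
  exact ⟨c, by simpa [smul_eq_mul] using hc⟩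






lemma mem_one_of_mem {T : Subring K} {x : K} (hx : x ∈ T) : x ∈ (1 : Submodule ↥T K) :=
  Submodule.mem_one.mpr ⟨⟨x, hx⟩, rfl⟩

lemma pair_inv (T : Subring K) (g : K) (f : Polynomial ℤ) (hprim : f.IsPrimitive)
    (hfg : aeval g f = 0) (hT : ∀ j, j < f.natDegree → hh f g j ∈ T) :
    ∃ J : Submodule ↥T K, span ↥T {1, g} * J = 1 := by
  set n := f.natDegree with hn
  have hmem : ∀ j, j ≤ n → hh f g j ∈ T := by
    intro j hj
    rcases lt_or_eq_of_le hj with h | h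
    · exact hT j h
    · rw [h, hh_natDegree, hfg]; exact zero_mem T
  have hgmem : ∀ j, j ≤ n → g * hh f g j ∈ T := by
    intro j hj
    rcases lt_or_eq_of_le hj with h | h
    · rw [hh_rec f g h]
      exact sub_mem (hmem _ h) (intCast_mem T _)
    · rw [h, hh_natDegree, hfg, mul_zero]; exact zero_mem T
  obtain ⟨c, hc⟩ := exists_bezout f hprim
  set b : K := ∑ i : Fin (n + 1), (c i : K) * hh f g (n - i) with hbdef
  set w : K := ∑ i : Fin (n + 1),
    (c i : K) * (if (i : ℕ) = n then 0 else hh f g (n - 1 - i)) with hwdef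
  have hb : b ∈ T := by
    refine Subring.sum_mem T fun i _ => mul_mem (intCast_mem T _) (hmem _ ?_)
    omega
  have hw : w ∈ T := by
    refine Subring.sum_mem T fun i _ => mul_mem (intCast_mem T _) ?_
    by_cases h : (i : ℕ) = n
    · rw [if_pos h]; exact zero_mem T
    · rw [if_neg h]; exact hmem (n - 1 - i) (by omega)
  have hgb : g * b ∈ T := by
    have : g * b = ∑ i : Fin (n + 1), (c i : K) * (g * hh f g (n - i)) := by
      rw [hbdef, Finset.mul_sum]
      exact Finset.sum_congr rfl fun i _ => by ring
    rw [this]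
    refine Subring.sum_mem T fun i _ => mul_mem (intCast_mem T _) (hgmem _ (by omega))
  have hident : b - g * w = 1 := by
    have key : b - g * w = ∑ i : Fin (n + 1), ((c i * f.coeff i : ℤ) : K) := by
      rw [hbdef, hwdef, Finset.mul_sum, ← Finset.sum_sub_distrib]
      refine Finset.sum_congr rfl fun i _ => ?_
      by_cases h : (i : ℕ) = n
      · have h0 : n - (i : ℕ) = 0 := by omega
        rw [if_pos h, h0, hh_zero]
        push_cast
        simp only [h, hn]
        ring
      · have hi : (i : ℕ) < n := by omega
        have hrec := hh_rec f g (j := n - 1 - i) (by omega)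
        have e1 : n - 1 - (i : ℕ) + 1 = n - i := by omega
        have e2 : n - 1 - (n - 1 - (i : ℕ)) = (i : ℕ) := by omega
        rw [e1, e2] at hrec
        rw [if_neg h]
        rw [show g * ((c i : K) * hh f g (n - 1 - ↑i))
            = (c i : K) * (g * hh f g (n - 1 - ↑i)) by ring, hrec]
        push_cast
        ring
    rw [key]
    rw [show ∑ i : Fin (n + 1), ((c i * f.coeff i : ℤ) : K)
        = ((∑ i : Fin (n + 1), c i * f.coeff i : ℤ) : K) by push_cast; rfl]
    rw [hc, Int.cast_one]
  refine ⟨span ↥T {b, w}, le_antisymm ?_ ?_⟩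
  · rw [span_mul_span]
    refine span_le.mpr ?_
    rintro z hz
    obtain ⟨m, hm, j, hj, rfl⟩ := Set.mem_mul.mp hz
    have hgw : g * w ∈ T := by
      have : g * w = b - 1 := by rw [← hident]; ring
      rw [this]; exact sub_mem hb (one_mem T)
    simp only [Set.mem_insert_iff, Set.mem_singleton_iff] at hm hj
    rcases hm with hm | hm <;> rcases hj with hj | hj <;>
      subst hm <;> subst hj
    · simpa using mem_one_of_mem hb
    · simpa using mem_one_of_mem hw
    · exact mem_one_of_mem hgb
    · exact mem_one_of_mem hgw
  · rw [Submodule.one_le]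
    have h1 : b ∈ span ↥T {1, g} * span ↥T {b, w} := by
      have h0 := Submodule.mul_mem_mul
        (subset_span (Set.mem_insert (1 : K) {g}) : (1:K) ∈ span ↥T {1, g})
        (subset_span (Set.mem_insert b {w}) : b ∈ span ↥T {b, w})
      simpa using h0
    have h2 : g * w ∈ span ↥T {1, g} * span ↥T {b, w} :=
      Submodule.mul_mem_mul (subset_span (Set.mem_insert_of_mem _ rfl))
        (subset_span (Set.mem_insert_of_mem _ rfl))
    have h3 := sub_mem h1 h2
    rwa [hident] at h3






lemma smul_eq_mul' (T : Subring K) (t : ↥T) (x : K) : t • x = (t : K) * x := rfl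

lemma span_pair_pow (T : Subring K) (g : K) (m : ℕ) :
    (span ↥T {1, g}) ^ m = span ↥T ((fun l : ℕ => g ^ l) '' Set.Iic m) := by
  induction m with
  | zero =>
    rw [pow_zero]
    have h : ((fun l : ℕ => g ^ l) '' Set.Iic 0) = {1} := by
      ext z
      simp [Nat.le_zero, eq_comm]
    rw [h, ← Submodule.one_eq_span]
  | succ m ih =>
    rw [pow_succ, ih, span_mul_span]
    congr 1
    ext z
    constructor
    · rintro ⟨x, ⟨l, hl, rfl⟩, y, hy, rfl⟩
      simp only [Set.mem_insert_iff, Set.mem_singleton_iff] at hy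
      rcases hy with rfl | rfl
      · exact ⟨l, by simpa using Nat.le_succ_of_le (by simpa using hl), by simp⟩
      · exact ⟨l + 1, by simpa using Nat.succ_le_succ (by simpa using hl), by
          simp [pow_succ]⟩
    · rintro ⟨l, hl, rfl⟩
      simp only [Set.mem_Iic] at hl
      rcases Nat.lt_or_ge l (m + 1) with h | h
      · exact ⟨g ^ l, ⟨l, by simpa using Nat.lt_succ_iff.mp h, rfl⟩, 1,
          Set.mem_insert 1 _, mul_one _⟩
      · have : l = m + 1 := le_antisymm hl h
        subst this
        exact ⟨g ^ m, ⟨m, by simp, rfl⟩, g,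
          Set.mem_insert_of_mem _ rfl, (pow_succ g m).symm⟩

lemma hh_mem_of_inv (T : Subring K) (g : K) (f : Polynomial ℤ) (hfg : aeval g f = 0)
    (J : Submodule ↥T K) (hJ : span ↥T {1, g} * J = 1) :
    ∀ j, j < f.natDegree → hh f g j ∈ T := by
  intro j hj
  set n := f.natDegree with hndef
  have hn : 0 < n := lt_of_le_of_lt (Nat.zero_le j) hj
  set P : Set K := (fun l : ℕ => g ^ l) '' Set.Iic (n - 1) with hPdef
  set N : Submodule ↥T K := span ↥T P with hNdef
  have hNinv : N * J ^ (n - 1) = 1 := by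
    rw [hNdef, hPdef, ← span_pair_pow, ← mul_pow, hJ, one_pow]
  have haux : ∀ i, i < n → ∀ j', j' ≤ n → hh f g j' * g ^ i ∈ N := by
    intro i
    induction i with
    | zero =>
      intro _ j' hj'
      rcases lt_or_eq_of_le hj' with h | h
      · rw [pow_zero, mul_one, hh]
        refine Submodule.sum_mem N fun i' hi' => ?_
        have hmem : g ^ i' ∈ P := by
          refine ⟨i', ?_, rfl⟩
          simp only [Set.mem_Iic]
          simp only [Finset.mem_range] at hi'
          omega
        have : ((f.coeff (n - j' + i') : ℤ) : K) * g ^ i'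
            = (⟨((f.coeff (n - j' + i') : ℤ) : K), intCast_mem T _⟩ : ↥T) • g ^ i' := rfl
        rw [this]
        exact Submodule.smul_mem N _ (subset_span hmem)
      · rw [h, hh_natDegree, hfg, zero_mul]
        exact zero_mem N
    | succ i ihi =>
      intro hin j' hj'
      rcases lt_or_eq_of_le hj' with h | h
      · have e : hh f g j' * g ^ (i + 1) = (g * hh f g j') * g ^ i := by ring
        rw [e, hh_rec f g h, sub_mul]
        refine sub_mem (ihi (by omega) (j' + 1) (by omega)) ?_
        have hmem : g ^ i ∈ P := ⟨i, by simp only [Set.mem_Iic]; omega, rfl⟩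
        have : ((f.coeff (n - 1 - j') : ℤ) : K) * g ^ i
            = (⟨((f.coeff (n - 1 - j') : ℤ) : K), intCast_mem T _⟩ : ↥T) • g ^ i := rfl
        rw [this]
        exact Submodule.smul_mem N _ (subset_span hmem)
      · rw [h, hh_natDegree, hfg, zero_mul]
        exact zero_mem N
  have hxN : span ↥T {hh f g j} * N ≤ N := by
    rw [hNdef, span_mul_span]
    refine span_le.mpr ?_
    rintro z hz
    obtain ⟨x, hx, y, hy, rfl⟩ := Set.mem_mul.mp hz
    obtain rfl := Set.mem_singleton_iff.mp hx
    obtain ⟨l, hl, rfl⟩ := hy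
    simp only [Set.mem_Iic] at hl
    exact haux l (by omega) j (le_of_lt hj)
  have hle : span ↥T {hh f g j} ≤ 1 := by
    calc span ↥T {hh f g j} = span ↥T {hh f g j} * (N * J ^ (n - 1)) := by
          rw [hNinv, mul_one]
      _ = (span ↥T {hh f g j} * N) * J ^ (n - 1) := by rw [mul_assoc]
      _ ≤ N * J ^ (n - 1) := mul_le_mul' hxN le_rfl
      _ = 1 := hNinv
  have hmem1 := hle (mem_span_singleton_self (hh f g j))
  obtain ⟨t, ht⟩ := Submodule.mem_one.mp hmem1
  rw [← ht]
  exact t.2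




def isInv (T : Subring K) (M : Submodule ↥T K) : Prop := ∃ J, M * J = 1

lemma isInv_mul {T : Subring K} {M N : Submodule ↥T K} (hM : isInv T M) (hN : isInv T N) :
    isInv T (M * N) := by
  obtain ⟨I, hI⟩ := hM
  obtain ⟨J, hJ⟩ := hN
  exact ⟨I * J, by rw [mul_mul_mul_comm, hI, hJ, one_mul]⟩

lemma isInv_of_mul {T : Subring K} {M N : Submodule ↥T K} (h : isInv T (M * N)) :
    isInv T M := by
  obtain ⟨J, hJ⟩ := h
  exact ⟨N * J, by rw [← mul_assoc, hJ]⟩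

lemma isInv_span_singleton (T : Subring K) (u : Kˣ) : isInv T (span ↥T {(u : K)}) := by
  refine ⟨span ↥T {((u⁻¹ : Kˣ) : K)}, ?_⟩
  rw [span_mul_span, Set.singleton_mul_singleton]
  have : (u : K) * ((u⁻¹ : Kˣ) : K) = 1 := by
    rw [← Units.val_mul, mul_inv_cancel]
    rfl
  rw [this, ← Submodule.one_eq_span]

lemma isInv_span_pair (T : Subring K) (u v : Kˣ)
    (h : isInv T (span ↥T ({1, ((u * v⁻¹ : Kˣ) : K)} : Set K))) :
    isInv T (span ↥T {(u : K), (v : K)}) := by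
  have hset : ({(v : K)} : Set K) * ({1, ((u * v⁻¹ : Kˣ) : K)} : Set K) = ({(v : K), (u : K)} : Set K) := by
    ext z
    constructor
    · rintro ⟨x, hx, y, hy, rfl⟩
      obtain rfl := Set.mem_singleton_iff.mp hx
      simp only [Set.mem_insert_iff, Set.mem_singleton_iff] at hy ⊢
      rcases hy with rfl | rfl
      · exact Or.inl (mul_one _)
      · refine Or.inr ?_
        push_cast
        field_simp
    · intro hz
      simp only [Set.mem_insert_iff, Set.mem_singleton_iff] at hz
      rcases hz with rfl | rfl
      · exact ⟨(v : K), rfl, 1, Set.mem_insert 1 _, mul_one _⟩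
      · refine ⟨(v : K), rfl, ((u * v⁻¹ : Kˣ) : K), Set.mem_insert_of_mem _ rfl, ?_⟩
        push_cast
        field_simp
  have hspan : span ↥T {(u : K), (v : K)}
      = span ↥T {(v : K)} * span ↥T {1, ((u * v⁻¹ : Kˣ) : K)} := by
    rw [span_mul_span, hset, Set.pair_comm]
  rw [hspan]
  exact isInv_mul (isInv_span_singleton T v) h

lemma abc_ident (T : Subring K) (A B C : Submodule ↥T K) :
    (A + B + C) * (A * B + A * C + B * C) = (A + B) * ((A + C) * (B + C)) := by
  simp only [mul_add, add_mul]
  simp only [Submodule.add_eq_sup]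
  simp only [mul_assoc, mul_comm, mul_left_comm, sup_assoc, sup_comm, sup_left_comm,
    sup_idem, sup_left_idem]

lemma isInv_spanFinset (T : Subring K) (G : Subgroup Kˣ)
    (hpair : ∀ u : Kˣ, u ∈ G → isInv T (span ↥T {1, (u : K)})) :
    ∀ (nn : ℕ) (Y : Finset Kˣ), Y.card = nn → Y.Nonempty → (↑Y : Set Kˣ) ⊆ (G : Set Kˣ) →
      isInv T (span ↥T ((fun u : Kˣ => (u : K)) '' (Y : Set Kˣ))) := by
  classical
  intro nn
  induction nn using Nat.strong_induction_on with
  | _ nn ih =>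
  intro Y hcard hne hsub
  obtain ⟨a, ha⟩ := hne
  by_cases hc1 : Y.card = 1
  · obtain ⟨a', rfl⟩ := Finset.card_eq_one.mp hc1
    have : ((fun u : Kˣ => (u : K)) '' ({a'} : Finset Kˣ)) = {(a' : K)} := by simp
    rw [this]
    exact isInv_span_singleton T a'
  by_cases hc2 : Y.card = 2
  · obtain ⟨u, v, huv, rfl⟩ := Finset.card_eq_two.mp hc2
    have : ((fun w : Kˣ => (w : K)) '' (({u, v} : Finset Kˣ) : Set Kˣ))
        = {(u : K), (v : K)} := by simp [Set.image_insert_eq]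
    rw [this]
    refine isInv_span_pair T u v (hpair _ (mul_mem ?_ (inv_mem ?_)))
    · exact hsub (by simp)
    · exact hsub (by simp)
  have h3 : 3 ≤ Y.card := by
    have : 0 < Y.card := Finset.card_pos.mpr ⟨a, ha⟩
    omega
  set Y1 := Y.erase a with hY1def
  have hY1card : Y1.card = Y.card - 1 := Finset.card_erase_of_mem ha
  have hY1ne : Y1.Nonempty := Finset.card_pos.mp (by omega)
  obtain ⟨b, hb⟩ := hY1ne
  set Z := Y1.erase b with hZdef
  have hZcard : Z.card = Y1.card - 1 := Finset.card_erase_of_mem hb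
  have hZne : Z.Nonempty := Finset.card_pos.mp (by omega)
  have haY1 : a ∉ Y1 := Finset.notMem_erase a Y
  have hbZ : b ∉ Z := Finset.notMem_erase b Y1
  have haZ : a ∉ Z := fun h => haY1 (Finset.erase_subset b Y1 h)
  have hbY : b ∈ Y := Finset.mem_of_mem_erase hb
  have hZY : Z ⊆ Y := (Finset.erase_subset b Y1).trans (Finset.erase_subset a Y)
  set A : Submodule ↥T K := span ↥T {(a : K)} with hA
  set B : Submodule ↥T K := span ↥T {(b : K)} with hB
  set C : Submodule ↥T K := span ↥T ((fun u : Kˣ => (u : K)) '' (Z : Set Kˣ)) with hC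
  have hspan_insert : ∀ (w : Kˣ) (W : Finset Kˣ),
      span ↥T ((fun u : Kˣ => (u : K)) '' ((insert w W : Finset Kˣ) : Set Kˣ))
        = span ↥T {(w : K)} + span ↥T ((fun u : Kˣ => (u : K)) '' (W : Set Kˣ)) := by
    intro w W
    rw [Finset.coe_insert, Set.image_insert_eq, Submodule.span_insert,
      Submodule.add_eq_sup]
  have hAB : isInv T (A + B) := by
    have : A + B = span ↥T {(a : K), (b : K)} := by
      rw [Submodule.span_insert, Submodule.add_eq_sup]
    rw [this]
    refine isInv_span_pair T a b (hpair _ (mul_mem ?_ (inv_mem ?_)))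
    · exact hsub ha
    · exact hsub hbY
  have hAC : isInv T (A + C) := by
    have hcard' : (insert a Z).card = Z.card + 1 := Finset.card_insert_of_notMem haZ
    have := ih (Z.card + 1) (by omega) (insert a Z) hcard' ⟨a, Finset.mem_insert_self a Z⟩
      (fun x hx => by
        rcases Finset.mem_insert.mp hx with rfl | hx
        · exact hsub ha
        · exact hsub (hZY hx))
    rwa [hspan_insert a Z] at this
  have hBC : isInv T (B + C) := by
    have hcard' : (insert b Z).card = Z.card + 1 := Finset.card_insert_of_notMem hbZ
    have := ih (Z.card + 1) (by omega) (insert b Z) hcard' ⟨b, Finset.mem_insert_self b Z⟩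
      (fun x hx => by
        rcases Finset.mem_insert.mp hx with rfl | hx
        · exact hsub hbY
        · exact hsub (hZY hx))
    rwa [hspan_insert b Z] at this
  have hgoal_eq : span ↥T ((fun u : Kˣ => (u : K)) '' (Y : Set Kˣ)) = A + B + C := by
    have h1 : Y = insert a (insert b Z) := by
      rw [hZdef, Finset.insert_erase hb, hY1def, Finset.insert_erase ha]
    rw [h1, hspan_insert, hspan_insert, ← hA, ← hB, ← hC, add_assoc]
  rw [hgoal_eq]
  have hident := abc_ident T A B C
  have hprod : isInv T ((A + B + C) * (A * B + A * C + B * C)) := by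
    rw [hident]
    exact isInv_mul hAB (isInv_mul hAC hBC)
  exact isInv_of_mul hprod


variable [NumberField K]

lemma T0_inv (Y : Finset Kˣ) (hne : Y.Nonempty) :
    ∃ J : Submodule ↥((integralClosure ℤ K).toSubring) K,
      span ↥((integralClosure ℤ K).toSubring) ((fun u : Kˣ => (u : K)) '' (Y : Set Kˣ)) * J = 1 := by
  show ∃ J : Submodule (𝓞 K) K, span (𝓞 K) ((fun u : Kˣ => (u : K)) '' (Y : Set Kˣ)) * J = 1
  set I : Submodule (𝓞 K) K := span (𝓞 K) ((fun u : Kˣ => (u : K)) '' (Y : Set Kˣ)) with hI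
  have hfg : I.FG := Submodule.fg_span (Y.finite_toSet.image _)
  have hfrac : IsFractional (𝓞 K)⁰ I := FractionalIdeal.isFractional_of_fg hfg
  set If : FractionalIdeal (𝓞 K)⁰ K := ⟨I, hfrac⟩ with hIf
  have hne0 : If ≠ 0 := by
    obtain ⟨u, hu⟩ := hne
    intro h
    have hmem : (u : K) ∈ I := subset_span ⟨u, by exact_mod_cast hu, rfl⟩
    have hcoe : I = (If : Submodule (𝓞 K) K) := rfl
    rw [hcoe, h] at hmem
    simp only [FractionalIdeal.coe_zero, Submodule.mem_bot] at hmem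
    exact u.ne_zero hmem
  have hcancel := mul_inv_cancel₀ hne0
  refine ⟨((If⁻¹ : FractionalIdeal (𝓞 K)⁰ K) : Submodule (𝓞 K) K), ?_⟩
  have hc := congrArg (fun J : FractionalIdeal (𝓞 K)⁰ K => (J : Submodule (𝓞 K) K)) hcancel
  have hc' : (If : Submodule (𝓞 K) K) * ((If⁻¹ : FractionalIdeal (𝓞 K)⁰ K) : Submodule (𝓞 K) K) = 1 := by
    simpa only [FractionalIdeal.coe_mul, FractionalIdeal.coe_one] using hc
  exact hc'

lemma order_equiv (S : Subring K) (hle : S ≤ (integralClosure ℤ K).toSubring) :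
    ∃ m : ℕ, Nonempty (↥S ≃+ (Fin m → ℤ)) := by
  let e : ↥S →+ 𝓞 K :=
    { toFun := fun s => ⟨s.1, hle s.2⟩
      map_zero' := rfl
      map_add' := fun _ _ => rfl }
  let el : ↥S →ₗ[ℤ] 𝓞 K := e.toIntLinearMap
  have hinj : Function.Injective el := by
    intro a b h
    have h2 : ((el a : 𝓞 K) : K) = ((el b : 𝓞 K) : K) := congrArg (fun z : 𝓞 K => (z : K)) h
    exact Subtype.ext h2
  let N : Submodule ℤ (𝓞 K) := LinearMap.range el
  let eq1 : ↥S ≃ₗ[ℤ] N := LinearEquiv.ofInjective el hinj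
  obtain ⟨m, bN⟩ := Submodule.basisOfPid (Module.Free.chooseBasis ℤ (𝓞 K)) N
  exact ⟨m, ⟨(eq1.trans bN.equivFun).toAddEquiv⟩⟩

noncomputable def ff (x : K) : Polynomial ℤ := (exists_prim x).choose

lemma ff_prim (x : K) : (ff x).IsPrimitive := (exists_prim x).choose_spec.1

lemma ff_aeval (x : K) : aeval x (ff x) = 0 := (exists_prim x).choose_spec.2.1

def Agen (G : Subgroup Kˣ) : Set K :=
  {y | ∃ u : Kˣ, u ∈ G ∧ ∃ j, j < (ff ((u : K))).natDegree ∧ y = hh (ff ((u : K))) ((u : K)) j}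

noncomputable def Smin (G : Subgroup Kˣ) : Subring K := Subring.closure (Agen G)

lemma pair_inv_Smin (G : Subgroup Kˣ) (u : Kˣ) (hu : u ∈ G) :
    isInv (Smin G) (span ↥(Smin G) ({1, ((u : K))} : Set K)) :=
  pair_inv (Smin G) ((u : K)) (ff ((u : K))) (ff_prim _) (ff_aeval _)
    (fun j hj => Subring.subset_closure ⟨u, hu, j, hj, rfl⟩)

lemma Smin_makes (G : Subgroup Kˣ) :
    ∀ Y : Finset Kˣ, Y.Nonempty → (Y : Set Kˣ) ⊆ (G : Set Kˣ) →
      ∃ J : Submodule ↥(Smin G) K,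
        span ↥(Smin G) ((fun u : Kˣ => (u : K)) '' (Y : Set Kˣ)) * J = 1 :=
  fun Y h1 h2 =>
    isInv_spanFinset (Smin G) G (fun u hu => pair_inv_Smin G u hu) Y.card Y rfl h1 h2

lemma Smin_min (G : Subgroup Kˣ) (T : Subring K)
    (hT : ∀ Y : Finset Kˣ, Y.Nonempty → (Y : Set Kˣ) ⊆ (G : Set Kˣ) →
      ∃ J : Submodule ↥T K,
        span ↥T ((fun u : Kˣ => (u : K)) '' (Y : Set Kˣ)) * J = 1) :
    Smin G ≤ T := by
  classical
  rw [Smin, Subring.closure_le]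
  rintro y ⟨u, hu, j, hj, rfl⟩
  obtain ⟨J, hJ⟩ := hT {1, u} ⟨1, by simp⟩ (by
    intro x hx
    simp only [Finset.coe_insert, Finset.coe_singleton, Set.mem_insert_iff,
      Set.mem_singleton_iff] at hx
    rcases hx with rfl | rfl
    · exact one_mem G
    · exact hu)
  have himg : ((fun w : Kˣ => (w : K)) '' (({1, u} : Finset Kˣ) : Set Kˣ))
      = ({1, ((u : K))} : Set K) := by
    simp [Set.image_insert_eq]
  rw [himg] at hJ
  exact hh_mem_of_inv T ((u : K)) (ff ((u : K))) (ff_aeval _) J hJ j hj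

end Stmt8Aux

/-- Let `K` be a number field and `G ⊆ K*` a subgroup. There is a unique subring
`S ⊆ K`, minimal with respect to inclusion, such that for every finite nonempty
subset `Y ⊆ G` the `S`-submodule `SY` of `K` is an invertible ideal of `S` within
`K`. Moreover this minimal subring is an order: its additive group is isomorphic
to `ℤ^m` for some `m ≥ 0` (it is a domain, being a subring of a field). -/
theorem stmt_8 {K : Type*} [Field K] [NumberField K] (G : Subgroup Kˣ) :
    (∃! S : Subring K, MakesFinsetsInvertible G S ∧
        ∀ T : Subring K, MakesFinsetsInvertible G T → S ≤ T) ∧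
    (∀ S : Subring K,
        (MakesFinsetsInvertible G S ∧ ∀ T : Subring K, MakesFinsetsInvertible G T → S ≤ T) →
        ∃ m : ℕ, Nonempty (↥S ≃+ (Fin m → ℤ))) := by
  classical
  constructor
  · refine ⟨Stmt8Aux.Smin G, ⟨Stmt8Aux.Smin_makes G, fun T hT => Stmt8Aux.Smin_min G T hT⟩, ?_⟩
    rintro S' ⟨hS'makes, hS'min⟩
    exact le_antisymm (hS'min _ (Stmt8Aux.Smin_makes G))
      (Stmt8Aux.Smin_min G S' hS'makes)
  · rintro S ⟨hSm, hSmin⟩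
    have hle : S ≤ (integralClosure ℤ K).toSubring :=
      hSmin _ (fun Y h1 _ => Stmt8Aux.T0_inv Y h1)
    exact Stmt8Aux.order_equiv S hle
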